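/- If A and B are positive invertible operators with 0 < m·I ≤ A ≤ M·I and A ≤ B, then A² ≤ ((M+m)²/(4Mm)) · B². -/

import Mathlib

set_option maxHeartbeats 1000000
set_option synthInstance.maxHeartbeats 400000

section KantorovichAux

variable {H : Type*} [NormedAddCommGroup H] [InnerProductSpace ℂ H] [CompleteSpace H]

/-- Continuous functional calculus of a quadratic polynomial. -/
lemma cfc_quadratic_aux (a : H →L[ℂ] H) (ha : IsSelfAdjoint a) (p q r : ℝ) :
    cfc (fun x : ℝ => p * x ^ 2 + q * x + r) a = p • a ^ 2 + q • a + r • (1 : H →L[ℂ] H) := by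
  rw [cfc_add (a := a) (fun x : ℝ => p * x ^ 2 + q * x) (fun _ => r)]
  rw [cfc_add (a := a) (fun x : ℝ => p * x ^ 2) (fun x => q * x)]
  rw [cfc_const_mul p (fun x : ℝ => x ^ 2) a]
  rw [cfc_const_mul_id q a]
  rw [cfc_pow_id a 2]
  rw [cfc_const r a]
  rw [Algebra.algebraMap_eq_smul_one]

end KantorovichAux

/-- If `A` and `B` are positive invertible operators with `0 < m • 1 ≤ A ≤ M • 1`
and `A ≤ B`, then `A² ≤ ((M+m)²/(4Mm)) • B²`. -/
theorem sq_le_kantorovich_sq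
    {H : Type*} [NormedAddCommGroup H] [InnerProductSpace ℂ H] [CompleteSpace H]
    (A B : H →L[ℂ] H) (hA : 0 ≤ A) (hB : 0 ≤ B)
    (hAinv : Invertible A) (hBinv : Invertible B)
    (m M : ℝ) (hm : 0 < m) (hmM : m ≤ M)
    (h1 : m • (1 : H →L[ℂ] H) ≤ A) (h2 : A ≤ M • (1 : H →L[ℂ] H))
    (hAB : A ≤ B) :
    A ^ 2 ≤ ((M + m) ^ 2 / (4 * M * m)) • B ^ 2 := by
  have hM : 0 < M := hm.trans_le hmM
  have hMm : 0 < M + m := by linarith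
  set K : ℝ := (M + m) ^ 2 / (4 * M * m) with hK
  have hKpos : 0 < K := by positivity
  have hsaA : IsSelfAdjoint A := IsSelfAdjoint.of_nonneg hA
  have hsaB : IsSelfAdjoint B := IsSelfAdjoint.of_nonneg hB
  -- the spectrum of `A` is contained in `[m, M]`
  have hspec : ∀ x ∈ spectrum ℝ A, m ≤ x ∧ x ≤ M := by
    intro x hx
    constructor
    · rw [← Algebra.algebraMap_eq_smul_one] at h1
      exact (algebraMap_le_iff_le_spectrum (R := ℝ) hsaA).mp h1 x hx
    · rw [← Algebra.algebraMap_eq_smul_one] at h2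
      exact (le_algebraMap_iff_spectrum_le (R := ℝ) hsaA).mp h2 x hx
  -- Step 1 : A² ≤ (M+m)•A - (M*m)•1
  have step1 : A ^ 2 ≤ (M + m) • A - (M * m) • (1 : H →L[ℂ] H) := by
    have h0 : 0 ≤ cfc (fun x : ℝ => (-1) * x ^ 2 + (M + m) * x + (-(M * m))) A := by
      apply cfc_nonneg
      intro x hx
      obtain ⟨h1x, h2x⟩ := hspec x hx
      nlinarith
    rw [cfc_quadratic_aux A hsaA] at h0
    have h0' := add_le_add_left h0 (A ^ 2)
    rw [zero_add] at h0'
    refine h0'.trans_eq ?_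
    rw [neg_smul, neg_smul, one_smul]
    abel
  -- Step 2 : monotonicity in the middle term
  have step2 : (M + m) • A - (M * m) • (1 : H →L[ℂ] H) ≤ (M + m) • B - (M * m) • 1 := by
    have hBA : (0 : H →L[ℂ] H) ≤ B - A := sub_nonneg.mpr hAB
    have h := smul_nonneg hMm.le hBA
    rw [smul_sub] at h
    have h' := sub_nonneg.mp h
    exact sub_le_sub_right h' _
  -- Step 3 : (M+m)•B - (M*m)•1 ≤ K•B²
  have step3 : (M + m) • B - (M * m) • (1 : H →L[ℂ] H) ≤ K • B ^ 2 := by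
    have h0 : 0 ≤ cfc (fun x : ℝ => K * x ^ 2 + (-(M + m)) * x + (M * m)) B := by
      apply cfc_nonneg
      intro x hx
      have hquad : K * x ^ 2 + (-(M + m)) * x + M * m
          = K * (x - 2 * M * m / (M + m)) ^ 2 := by
        rw [hK]
        field_simp
        ring
      rw [hquad]
      positivity
    rw [cfc_quadratic_aux B hsaB] at h0
    have h0' := add_le_add_left h0 ((M + m) • B - (M * m) • (1 : H →L[ℂ] H))
    rw [zero_add] at h0'
    refine h0'.trans_eq ?_
    rw [neg_smul]
    abel
  exact step1.trans (step2.trans step3)
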